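/- Work on the n-qubit space (ℂ²)^{⊗n}, realized as 2^n × 2^n complex matrices indexed by functions f, g : {1,…,n} → {0,1}. For 1 ≤ k ≤ n define the sequentially coupled Casimir operator J_k² = (Σ_{i=1}^k S^x_i)² + (Σ_{i=1}^k S^y_i)² + (Σ_{i=1}^k S^z_i)², and for 1 ≤ m ≤ n define the YJM operator X̂_m = Σ_{i=1}^{m−1} U_{(i,m)} (with X̂_1 = 0). Then J_k² and X̂_m commute: J_k² X̂_m = X̂_m J_k² for all 1 ≤ k, m ≤ n. -/

import Mathlib

/-! **Statement 9.** On the `n`-qubit space (matrices indexed by functions `Fin n → Fin 2`),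
the sequentially coupled Casimir operators
`J_k² = (Σ_{i=1}^k S^x_i)² + (Σ_{i=1}^k S^y_i)² + (Σ_{i=1}^k S^z_i)²` commute with the
YJM operators `X̂_m = Σ_{i=1}^{m−1} U_{(i,m)}` (with `X̂_1 = 0`). -/

/-- The permutation operator `U_σ` on the `n`-qubit space:
`(U_σ)_{f,g} = 1` iff `f (σ i) = g i` for all `i`. -/
noncomputable def permOp (n : ℕ) (σ : Equiv.Perm (Fin n)) :
    Matrix (Fin n → Fin 2) (Fin n → Fin 2) ℂ :=
  Matrix.of fun f g => if ∀ i : Fin n, f (σ i) = g i then 1 else 0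

/-- The one-site operator acting as the `2 × 2` matrix `M` on the `i`-th tensor factor and as
the identity on all other factors. -/
noncomputable def oneSiteOp (n : ℕ) (M : Matrix (Fin 2) (Fin 2) ℂ) (i : Fin n) :
    Matrix (Fin n → Fin 2) (Fin n → Fin 2) ℂ :=
  Matrix.of fun f g => if ∀ j : Fin n, j ≠ i → f j = g j then M (f i) (g i) else 0

/-- The spin operator `S^x_i`: half the Pauli matrix `σ^x` acting on the `i`-th qubit. -/
noncomputable def SpinX (n : ℕ) (i : Fin n) : Matrix (Fin n → Fin 2) (Fin n → Fin 2) ℂ :=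
  oneSiteOp n ((1 / 2 : ℂ) • !![0, 1; 1, 0]) i

/-- The spin operator `S^y_i`: half the Pauli matrix `σ^y` acting on the `i`-th qubit. -/
noncomputable def SpinY (n : ℕ) (i : Fin n) : Matrix (Fin n → Fin 2) (Fin n → Fin 2) ℂ :=
  oneSiteOp n ((1 / 2 : ℂ) • !![0, -Complex.I; Complex.I, 0]) i

/-- The spin operator `S^z_i`: half the Pauli matrix `σ^z` acting on the `i`-th qubit. -/
noncomputable def SpinZ (n : ℕ) (i : Fin n) : Matrix (Fin n → Fin 2) (Fin n → Fin 2) ℂ :=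
  oneSiteOp n ((1 / 2 : ℂ) • !![1, 0; 0, -1]) i

/-- The sequentially coupled Casimir operator
`J_k² = (Σ_{i=1}^k S^x_i)² + (Σ_{i=1}^k S^y_i)² + (Σ_{i=1}^k S^z_i)²`
(1-based site labels; site `i : Fin n` has label `i + 1`). -/
noncomputable def casimirOp (n k : ℕ) : Matrix (Fin n → Fin 2) (Fin n → Fin 2) ℂ :=
  (∑ i : Fin n, if (i : ℕ) + 1 ≤ k then SpinX n i else 0) ^ 2 +
    (∑ i : Fin n, if (i : ℕ) + 1 ≤ k then SpinY n i else 0) ^ 2 +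
    (∑ i : Fin n, if (i : ℕ) + 1 ≤ k then SpinZ n i else 0) ^ 2

/-- The YJM operator `X̂_m = Σ_{i=1}^{m−1} U_{(i,m)}` (1-based labels; `X̂_1 = 0`). -/
noncomputable def yjmOp (n m : ℕ) : Matrix (Fin n → Fin 2) (Fin n → Fin 2) ℂ :=
  ∑ i : Fin n, ∑ j : Fin n,
    if (i : ℕ) + 1 < m ∧ (j : ℕ) + 1 = m then permOp n (Equiv.swap i j) else 0

open Equiv Matrix Finset
variable {n : ℕ}

lemma permOp_mul (σ τ : Equiv.Perm (Fin n)) :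
    permOp n σ * permOp n τ = permOp n (σ * τ) := by
  ext f g
  rw [Matrix.mul_apply]
  simp only [permOp, Matrix.of_apply]
  rw [Finset.sum_eq_single (f ∘ σ)]
  · by_cases h : ∀ i, f (σ (τ i)) = g i
    · simp [h, Equiv.Perm.mul_apply, Function.comp]
    · simp [Equiv.Perm.mul_apply, h, Function.comp]
  · intro h _ hne
    have : ¬ ∀ i, f (σ i) = h i := fun hc => hne (funext fun i => (hc i).symm)
    simp [this]
  · simp

lemma permOp_one : permOp n 1 = 1 := by
  ext f g
  simp only [permOp, Matrix.of_apply, Equiv.Perm.coe_one, id_eq, Matrix.one_apply]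
  by_cases h : f = g
  · simp [h]
  · exact (if_neg (fun hc => h (funext hc))).trans (if_neg h).symm

lemma sum_update (f : Fin n → Fin 2) (i : Fin n) (F : (Fin n → Fin 2) → ℂ)
    (hF : ∀ h, ¬ (∀ l, l ≠ i → h l = f l) → F h = 0) :
    ∑ h, F h = ∑ v : Fin 2, F (Function.update f i v) := by
  classical
  have h1 : ∑ h ∈ (Finset.univ.image (Function.update f i)), F h = ∑ h, F h := by
    refine Finset.sum_subset (Finset.subset_univ _) (fun h _ hh => hF h (fun hc => hh ?_))
    refine Finset.mem_image.mpr ⟨h i, Finset.mem_univ _, funext fun l => ?_⟩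
    by_cases hl : l = i
    · subst hl; simp
    · simp [Function.update_of_ne hl, hc l hl]
  rw [← h1, Finset.sum_image]
  intro a _ b _ hab
  have := congrFun hab i
  simpa using this

lemma oneSite_mul_same (M N : Matrix (Fin 2) (Fin 2) ℂ) (i : Fin n) :
    oneSiteOp n M i * oneSiteOp n N i = oneSiteOp n (M * N) i := by
  ext f g
  rw [Matrix.mul_apply]
  rw [sum_update f i _ (fun h hc => by
    have : ¬ ∀ l, l ≠ i → f l = h l := fun hc2 => hc fun l hl => (hc2 l hl).symm
    simp [oneSiteOp, this])]
  simp only [oneSiteOp, Matrix.of_apply]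
  have k1 : ∀ v : Fin 2, (∀ j, j ≠ i → f j = Function.update f i v j) := fun v j hj => by
    rw [Function.update_of_ne hj]
  have k2 : ∀ v : Fin 2, (∀ j, j ≠ i → Function.update f i v j = g j) ↔ (∀ j, j ≠ i → f j = g j) := by
    intro v
    constructor
    · intro h j hj; rw [← h j hj, Function.update_of_ne hj]
    · intro h j hj; rw [Function.update_of_ne hj]; exact h j hj
  simp only [k2, Function.update_self, if_pos (k1 _)]
  by_cases hc : ∀ l, l ≠ i → f l = g l
  · simp [hc, Matrix.mul_apply, Fin.sum_univ_two]
  · simp [hc]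

lemma oneSite_mul_ne (M N : Matrix (Fin 2) (Fin 2) ℂ) (i j : Fin n) (hij : i ≠ j) :
    oneSiteOp n M i * oneSiteOp n N j =
      Matrix.of (fun f g => if ∀ l, l ≠ i → l ≠ j → f l = g l
        then M (f i) (g i) * N (f j) (g j) else 0) := by
  ext f g
  rw [Matrix.mul_apply]
  rw [sum_update f i _ (fun h hc => by
    have : ¬ ∀ l, l ≠ i → f l = h l := fun hc2 => hc fun l hl => (hc2 l hl).symm
    simp [oneSiteOp, this])]
  simp only [oneSiteOp, Matrix.of_apply]
  have k1 : ∀ v : Fin 2, (∀ l, l ≠ i → f l = Function.update f i v l) := fun v l hl => by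
    rw [Function.update_of_ne hl]
  simp only [if_pos (k1 _), Function.update_self, Function.update_of_ne (Ne.symm hij)]
  by_cases hC : ∀ l, l ≠ i → l ≠ j → f l = g l
  · have key : ∀ v : Fin 2, (∀ l, l ≠ j → Function.update f i v l = g l) ↔ v = g i := by
      intro v
      constructor
      · intro h
        have := h i hij
        rwa [Function.update_self] at this
      · intro hv l hl
        by_cases hli : l = i
        · subst hli; rwa [Function.update_self]
        · rw [Function.update_of_ne hli]; exact hC l hli hl
    simp only [key, if_pos hC]
    rw [Finset.sum_eq_single (g i)]
    · simp
    · intro v _ hv; simp [hv]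
    · simp
  · have key0 : ∀ v : Fin 2, ¬ (∀ l, l ≠ j → Function.update f i v l = g l) := by
      intro v hv
      exact hC fun l hli hlj => by
        have := hv l hlj
        rwa [Function.update_of_ne hli] at this
    simp [key0, hC]

lemma oneSite_add (M N : Matrix (Fin 2) (Fin 2) ℂ) (i : Fin n) :
    oneSiteOp n M i + oneSiteOp n N i = oneSiteOp n (M + N) i := by
  ext f g
  simp only [oneSiteOp, Matrix.add_apply, Matrix.of_apply]
  by_cases hc : ∀ l, l ≠ i → f l = g l
  · rw [if_pos hc, if_pos hc, if_pos hc]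
  · rw [if_neg hc, if_neg hc, if_neg hc]
    exact add_zero 0

lemma oneSite_one (i : Fin n) : oneSiteOp n 1 i = 1 := by
  ext f g
  simp only [oneSiteOp, Matrix.of_apply, Matrix.one_apply]
  by_cases h : f = g
  · subst h; simp
  · rw [if_neg h]
    by_cases hc : ∀ l, l ≠ i → f l = g l
    · rw [if_pos hc, if_neg]
      intro he
      exact h (funext fun l => by
        by_cases hl : l = i
        · subst hl; exact he
        · exact hc l hl)
    · rw [if_neg hc]

lemma oneSite_smul (c : ℂ) (M : Matrix (Fin 2) (Fin 2) ℂ) (i : Fin n) :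
    oneSiteOp n (c • M) i = c • oneSiteOp n M i := by
  ext f g
  simp only [oneSiteOp, Matrix.of_apply, Matrix.smul_apply]
  by_cases hc : ∀ l, l ≠ i → f l = g l
  · rw [if_pos hc, if_pos hc]
  · rw [if_neg hc, if_neg hc]
    exact (smul_zero c).symm

lemma spin_sq (i : Fin n) :
    SpinX n i * SpinX n i + SpinY n i * SpinY n i + SpinZ n i * SpinZ n i
      = (3/4 : ℂ) • (1 : Matrix (Fin n → Fin 2) (Fin n → Fin 2) ℂ) := by
  rw [SpinX, SpinY, SpinZ, oneSite_mul_same, oneSite_mul_same, oneSite_mul_same,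
    oneSite_add, oneSite_add]
  have : ((1 / 2 : ℂ) • !![0, 1; 1, 0]) * ((1 / 2 : ℂ) • !![0, 1; 1, 0]) +
      ((1 / 2 : ℂ) • !![0, -Complex.I; Complex.I, 0]) * ((1 / 2 : ℂ) • !![0, -Complex.I; Complex.I, 0]) +
      ((1 / 2 : ℂ) • !![1, 0; 0, -1]) * ((1 / 2 : ℂ) • !![1, 0; 0, -1]) = (3/4 : ℂ) • 1 := by
    ext a b
    fin_cases a <;> fin_cases b <;>
      simp [Matrix.mul_apply, Fin.sum_univ_two, Matrix.one_apply, Complex.I_mul_I] <;> ring_nf <;>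
      simp [Complex.I_sq] <;> ring
  rw [this, oneSite_smul, oneSite_one]

lemma spin_cross (i j : Fin n) (hij : i ≠ j) :
    SpinX n i * SpinX n j + SpinY n i * SpinY n j + SpinZ n i * SpinZ n j
      = (1/2 : ℂ) • permOp n (Equiv.swap i j) + (-(1/4) : ℂ) • 1 := by
  simp only [SpinX, SpinY, SpinZ]
  rw [oneSite_mul_ne _ _ _ _ hij, oneSite_mul_ne _ _ _ _ hij, oneSite_mul_ne _ _ _ _ hij]
  ext f g
  simp only [Matrix.add_apply, Matrix.of_apply, Matrix.smul_apply, Matrix.one_apply, permOp,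
    smul_eq_mul]
  have hswap : (∀ l, f (Equiv.swap i j l) = g l) ↔
      ((∀ l, l ≠ i → l ≠ j → f l = g l) ∧ f j = g i ∧ f i = g j) := by
    constructor
    · intro h
      refine ⟨fun l h1 h2 => ?_, ?_, ?_⟩
      · have := h l; rwa [Equiv.swap_apply_of_ne_of_ne h1 h2] at this
      · have := h i; rwa [Equiv.swap_apply_left] at this
      · have := h j; rwa [Equiv.swap_apply_right] at this
    · rintro ⟨h1, h2, h3⟩ l
      by_cases e1 : l = i
      · subst e1; rwa [Equiv.swap_apply_left]
      · by_cases e2 : l = j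
        · subst e2; rwa [Equiv.swap_apply_right]
        · rw [Equiv.swap_apply_of_ne_of_ne e1 e2]; exact h1 l e1 e2
  have hfg : (f = g) ↔ ((∀ l, l ≠ i → l ≠ j → f l = g l) ∧ f i = g i ∧ f j = g j) := by
    constructor
    · intro h; subst h; exact ⟨fun _ _ _ => rfl, rfl, rfl⟩
    · rintro ⟨h1, h2, h3⟩
      funext l
      by_cases e1 : l = i
      · subst e1; exact h2
      · by_cases e2 : l = j
        · subst e2; exact h3
        · exact h1 l e1 e2
  simp only [hswap, hfg]
  by_cases hC : ∀ l, l ≠ i → l ≠ j → f l = g l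
  · simp only [eq_true hC, true_and, if_true]
    generalize f i = a
    generalize g i = b
    generalize f j = c
    generalize g j = d
    fin_cases a <;> fin_cases b <;> fin_cases c <;> fin_cases d <;>
      norm_num [Matrix.smul_apply, Fin.ext_iff] <;> ring_nf <;>
      simp [Complex.I_sq] <;> ring
  · rw [if_neg hC, if_neg hC, if_neg hC, if_neg (fun h => hC h.1), if_neg (fun h => hC h.1)]
    simp

noncomputable def swapSum (n k : ℕ) : Matrix (Fin n → Fin 2) (Fin n → Fin 2) ℂ :=
  ∑ i : Fin n, ∑ j : Fin n,
    if (i : ℕ) + 1 ≤ k ∧ (j : ℕ) + 1 ≤ k ∧ i ≠ j then permOp n (Equiv.swap i j) else 0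

lemma permOp_comm_swapSum (σ : Equiv.Perm (Fin n)) (k : ℕ)
    (hσ : ∀ l : Fin n, ((σ l : Fin n) : ℕ) + 1 ≤ k ↔ (l : ℕ) + 1 ≤ k) :
    permOp n σ * swapSum n k = swapSum n k * permOp n σ := by
  rw [swapSum]
  simp only [Finset.mul_sum, Finset.sum_mul]
  refine Fintype.sum_bijective σ σ.bijective _ _ (fun i => ?_)
  refine Fintype.sum_bijective σ σ.bijective _ _ (fun j => ?_)
  by_cases hc : (i : ℕ) + 1 ≤ k ∧ (j : ℕ) + 1 ≤ k ∧ i ≠ j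
  · have hc' : ((σ i : Fin n) : ℕ) + 1 ≤ k ∧ ((σ j : Fin n) : ℕ) + 1 ≤ k ∧ σ i ≠ σ j :=
      ⟨(hσ i).mpr hc.1, (hσ j).mpr hc.2.1, fun h => hc.2.2 (σ.injective h)⟩
    rw [if_pos hc, if_pos hc', permOp_mul, permOp_mul, Equiv.mul_swap_eq_swap_mul]
  · have hc' : ¬ (((σ i : Fin n) : ℕ) + 1 ≤ k ∧ ((σ j : Fin n) : ℕ) + 1 ≤ k ∧ σ i ≠ σ j) := by
      intro h
      exact hc ⟨(hσ i).mp h.1, (hσ j).mp h.2.1, fun he => h.2.2 (congrArg σ he)⟩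
    rw [if_neg hc, if_neg hc', mul_zero, zero_mul]

lemma swapSum_comm_aux (a b : ℕ) (hab : a ≤ b) :
    swapSum n a * swapSum n b = swapSum n b * swapSum n a := by
  have ha : swapSum n a = ∑ i : Fin n, ∑ j : Fin n,
      if (i : ℕ) + 1 ≤ a ∧ (j : ℕ) + 1 ≤ a ∧ i ≠ j then permOp n (Equiv.swap i j) else 0 := rfl
  rw [ha]
  simp only [Finset.sum_mul, Finset.mul_sum]
  refine Finset.sum_congr rfl (fun i _ => Finset.sum_congr rfl (fun j _ => ?_))
  by_cases hc : (i : ℕ) + 1 ≤ a ∧ (j : ℕ) + 1 ≤ a ∧ i ≠ j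
  · rw [if_pos hc]
    refine permOp_comm_swapSum _ _ (fun l => ?_)
    by_cases hl : l = i
    · subst hl; rw [Equiv.swap_apply_left]; omega
    · by_cases hl2 : l = j
      · subst hl2; rw [Equiv.swap_apply_right]; omega
      · rw [Equiv.swap_apply_of_ne_of_ne hl hl2]
  · rw [if_neg hc, zero_mul, mul_zero]

lemma swapSum_comm (a b : ℕ) : swapSum n a * swapSum n b = swapSum n b * swapSum n a := by
  rcases le_total a b with h | h
  · exact swapSum_comm_aux a b h
  · exact (swapSum_comm_aux b a h).symm

lemma yjm_decomp (m : ℕ) :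
    swapSum n m = swapSum n (m - 1) + yjmOp n m + yjmOp n m := by
  have yjm' : yjmOp n m = ∑ i : Fin n, ∑ j : Fin n,
      (if (j : ℕ) + 1 < m ∧ (i : ℕ) + 1 = m then permOp n (Equiv.swap i j) else 0) := by
    rw [yjmOp, Finset.sum_comm]
    refine Finset.sum_congr rfl fun i _ => Finset.sum_congr rfl fun j _ => ?_
    rw [Equiv.swap_comm]
  nth_rewrite 2 [yjm']
  rw [swapSum, swapSum, yjmOp]
  simp only [← Finset.sum_add_distrib]
  refine Finset.sum_congr rfl fun i _ => Finset.sum_congr rfl fun j _ => ?_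
  simp only [ne_eq, Fin.ext_iff]
  split_ifs <;> first | omega | abel

noncomputable def cconst (n k : ℕ) : ℂ :=
  ∑ i : Fin n, ∑ j : Fin n,
    if (i : ℕ) + 1 ≤ k ∧ (j : ℕ) + 1 ≤ k then (if i = j then (3/4 : ℂ) else (-(1/4) : ℂ)) else 0

lemma casimir_eq (k : ℕ) :
    casimirOp n k = cconst n k • (1 : Matrix (Fin n → Fin 2) (Fin n → Fin 2) ℂ)
      + (1/2 : ℂ) • swapSum n k := by
  have expand : ∀ S : (Fin n) → Matrix (Fin n → Fin 2) (Fin n → Fin 2) ℂ,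
      (∑ i : Fin n, if (i : ℕ) + 1 ≤ k then S i else 0) ^ 2 =
        ∑ i : Fin n, ∑ j : Fin n,
          (if (i : ℕ) + 1 ≤ k then S i else 0) * (if (j : ℕ) + 1 ≤ k then S j else 0) := by
    intro S
    rw [pow_two, Finset.sum_mul_sum]
  rw [casimirOp, expand, expand, expand, cconst, swapSum, Finset.smul_sum, Finset.sum_smul]
  simp only [Finset.smul_sum, Finset.sum_smul, ← Finset.sum_add_distrib]
  refine Finset.sum_congr rfl fun i _ => Finset.sum_congr rfl fun j _ => ?_
  by_cases hci : (i : ℕ) + 1 ≤ k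
  · by_cases hcj : (j : ℕ) + 1 ≤ k
    · simp only [if_pos hci, if_pos hcj, if_pos (⟨hci, hcj⟩ : _ ∧ _)]
      by_cases hij : i = j
      · subst hij
        rw [if_pos rfl, if_neg (by simp : ¬((i:ℕ)+1 ≤ k ∧ (i:ℕ)+1 ≤ k ∧ i ≠ i)), smul_zero,
          add_zero, spin_sq]
      · rw [if_neg hij, if_pos ⟨hci, hcj, hij⟩, spin_cross i j hij]
        module
    · have : ¬ ((i:ℕ)+1 ≤ k ∧ (j:ℕ)+1 ≤ k) := fun h => hcj h.2
      have h2 : ¬ ((i:ℕ)+1 ≤ k ∧ (j:ℕ)+1 ≤ k ∧ i ≠ j) := fun h => hcj h.2.1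
      simp only [if_neg hcj, if_neg this, if_neg h2, mul_zero, smul_zero, zero_smul, add_zero,
        zero_add]
  · have : ¬ ((i:ℕ)+1 ≤ k ∧ (j:ℕ)+1 ≤ k) := fun h => hci h.1
    have h2 : ¬ ((i:ℕ)+1 ≤ k ∧ (j:ℕ)+1 ≤ k ∧ i ≠ j) := fun h => hci h.1
    simp only [if_neg hci, if_neg this, if_neg h2, zero_mul, smul_zero, zero_smul, add_zero,
      zero_add]

lemma swapSum_comm_yjm (k m : ℕ) :
    swapSum n k * yjmOp n m = yjmOp n m * swapSum n k := by
  have e := yjm_decomp (n := n) m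
  have hdd : yjmOp n m + yjmOp n m = swapSum n m - swapSum n (m - 1) := by
    rw [e]; abel
  have h2 : swapSum n k * (yjmOp n m + yjmOp n m)
      = (yjmOp n m + yjmOp n m) * swapSum n k := by
    rw [hdd, mul_sub, sub_mul, swapSum_comm k m, swapSum_comm k (m-1)]
  have h3 : (2 : ℂ) • (swapSum n k * yjmOp n m) = (2 : ℂ) • (yjmOp n m * swapSum n k) := by
    rw [two_smul, two_smul, ← mul_add, ← add_mul, h2]
  have := smul_right_injective (Matrix (Fin n → Fin 2) (Fin n → Fin 2) ℂ)
    (two_ne_zero (α := ℂ)) h3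
  exact this

theorem stmt_9 (n k m : ℕ) (hk1 : 1 ≤ k) (hkn : k ≤ n) (hm1 : 1 ≤ m) (hmn : m ≤ n) :
    casimirOp n k * yjmOp n m = yjmOp n m * casimirOp n k := by
  rw [casimir_eq]
  rw [add_mul, mul_add, smul_mul_assoc, smul_mul_assoc, mul_smul_comm, mul_smul_comm,
    one_mul, mul_one, swapSum_comm_yjm]
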